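/- arXiv:2308.08727 — 2 statements merged into one kernel-verified Lean document; each statement's English description precedes it below -/
import Mathlib

section
/- Let C be a symmetric positive definite n×n real matrix, R a symmetric positive definite m×m real matrix, H an m×n real matrix, and let a, b ≥ 0 be real constants. For σ > 0 define the weights l_C(σ) = exp(−a/(2σ²)) and l_R(σ) = exp(−b/(2σ²)), and the MC-EnKF gain K̃(σ) = (l_C(σ)·C⁻¹ + l_R(σ)·Hᵀ R⁻¹ H)⁻¹ Hᵀ (l_R(σ)·R⁻¹). Then as σ → ∞, K̃(σ) converges (entrywise) to the EnKF gain K = C Hᵀ (H C Hᵀ + R)⁻¹. -/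
open Matrix Filter Topology

/-- Theorem 1 of the paper: the MC-EnKF gain
`K̃(σ) = (l_C(σ) C⁻¹ + l_R(σ) Hᵀ R⁻¹ H)⁻¹ Hᵀ (l_R(σ) R⁻¹)` with
`l_C(σ) = exp(−a/(2σ²))`, `l_R(σ) = exp(−b/(2σ²))` converges entrywise to the
EnKF gain `K = C Hᵀ (H C Hᵀ + R)⁻¹` as `σ → ∞`. -/
theorem stmt_7 {n m : ℕ}
    (C : Matrix (Fin n) (Fin n) ℝ) (R : Matrix (Fin m) (Fin m) ℝ)
    (H : Matrix (Fin m) (Fin n) ℝ)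
    (hC : C.PosDef) (hR : R.PosDef)
    (a b : ℝ) (ha : 0 ≤ a) (hb : 0 ≤ b) :
    Tendsto
      (fun σ : ℝ =>
        (Real.exp (-a / (2 * σ ^ 2)) • C⁻¹
            + Real.exp (-b / (2 * σ ^ 2)) • (Hᵀ * R⁻¹ * H))⁻¹
          * Hᵀ * (Real.exp (-b / (2 * σ ^ 2)) • R⁻¹))
      atTop (𝓝 (C * Hᵀ * (H * C * Hᵀ + R)⁻¹)) := by
  have hHt : Hᴴ = Hᵀ := by ext i j; simp [Matrix.conjTranspose_apply]
  have hA : (Hᵀ * R⁻¹ * H).PosSemidef := by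
    have := (hR.inv.posSemidef).conjTranspose_mul_mul_same H
    rwa [hHt] at this
  have hM : (C⁻¹ + Hᵀ * R⁻¹ * H).PosDef := hC.inv.add_posSemidef hA
  have hS : (H * C * Hᵀ + R).PosDef := by
    have hHCHt : (H * C * Hᵀ).PosSemidef := by
      have := (hC.posSemidef).mul_mul_conjTranspose_same H
      rwa [hHt] at this
    exact Matrix.PosDef.posSemidef_add hHCHt hR
  have hCC : C⁻¹ * C = 1 := Matrix.nonsing_inv_mul C hC.det_pos.ne'.isUnit
  have hRR : R⁻¹ * R = 1 := Matrix.nonsing_inv_mul R hR.det_pos.ne'.isUnit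
  have hMM : (C⁻¹ + Hᵀ * R⁻¹ * H)⁻¹ * (C⁻¹ + Hᵀ * R⁻¹ * H) = 1 :=
    Matrix.nonsing_inv_mul _ hM.det_pos.ne'.isUnit
  have hSS : (H * C * Hᵀ + R) * (H * C * Hᵀ + R)⁻¹ = 1 :=
    Matrix.mul_nonsing_inv _ hS.det_pos.ne'.isUnit
  -- key algebraic identity
  have key : (C⁻¹ + Hᵀ * R⁻¹ * H) * (C * Hᵀ) = Hᵀ * R⁻¹ * (H * C * Hᵀ + R) := by
    rw [Matrix.add_mul, Matrix.mul_add, ← Matrix.mul_assoc C⁻¹ C Hᵀ, hCC, Matrix.one_mul,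
      Matrix.mul_assoc Hᵀ R⁻¹ R, hRR, Matrix.mul_one, add_comm]
    congr 1
    simp [Matrix.mul_assoc]
  have h1 : (C⁻¹ + Hᵀ * R⁻¹ * H)⁻¹ * ((C⁻¹ + Hᵀ * R⁻¹ * H) * (C * Hᵀ)) = C * Hᵀ := by
    rw [← Matrix.mul_assoc, hMM, Matrix.one_mul]
  have h2 : (C⁻¹ + Hᵀ * R⁻¹ * H)⁻¹ * (Hᵀ * R⁻¹ * (H * C * Hᵀ + R)) = C * Hᵀ := by
    rw [← key]; exact h1
  have target_eq :
      C * Hᵀ * (H * C * Hᵀ + R)⁻¹ = (C⁻¹ + Hᵀ * R⁻¹ * H)⁻¹ * Hᵀ * R⁻¹ := by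
    have hSS' : H * (C * Hᵀ) + R = H * C * Hᵀ + R := by rw [← Matrix.mul_assoc]
    rw [← h2]
    simp only [Matrix.mul_assoc]
    rw [hSS', hSS, Matrix.mul_one]
  rw [target_eq]
  -- weights tend to 1
  have hsq : Tendsto (fun σ : ℝ => 2 * σ ^ 2) atTop atTop :=
    (tendsto_pow_atTop two_ne_zero).const_mul_atTop two_pos
  have hw : ∀ c : ℝ, Tendsto (fun σ : ℝ => Real.exp (-c / (2 * σ ^ 2))) atTop (𝓝 1) := by
    intro c
    have h0 : Tendsto (fun σ : ℝ => -c / (2 * σ ^ 2)) atTop (𝓝 0) :=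
      Tendsto.div_atTop tendsto_const_nhds hsq
    simpa [Function.comp_def] using (Real.continuous_exp.continuousAt.tendsto.comp h0)
  -- continuity of the matrix expression at weights (1,1)
  have hinv : ContinuousAt Inv.inv (C⁻¹ + Hᵀ * R⁻¹ * H) := by
    apply continuousAt_matrix_inv
    exact NormedRing.inverse_continuousAt hM.det_pos.ne'.isUnit.unit
  have hInner : Continuous (fun p : ℝ × ℝ =>
      p.1 • C⁻¹ + p.2 • (Hᵀ * R⁻¹ * H)) :=
    (continuous_fst.smul continuous_const).add (continuous_snd.smul continuous_const)
  have hG : ContinuousAt (fun p : ℝ × ℝ =>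
      (p.1 • C⁻¹ + p.2 • (Hᵀ * R⁻¹ * H))⁻¹) (1, 1) := by
    refine ContinuousAt.comp ?_ hInner.continuousAt
    simpa using hinv
  have hΦ : Continuous (fun q : Matrix (Fin n) (Fin n) ℝ × ℝ =>
      q.1 * Hᵀ * (q.2 • R⁻¹)) :=
    (continuous_fst.matrix_mul continuous_const).matrix_mul
      (continuous_snd.smul continuous_const)
  have hpair : Tendsto (fun σ : ℝ =>
      (Real.exp (-a / (2 * σ ^ 2)), Real.exp (-b / (2 * σ ^ 2)))) atTop (𝓝 (1, 1)) :=
    (hw a).prodMk_nhds (hw b)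
  have hF' := ContinuousAt.comp (hΦ.continuousAt) (ContinuousAt.prodMk hG continuousAt_snd)
  have hlim := hF'.tendsto.comp hpair
  simp only [Function.comp, one_smul] at hlim
  exact hlim
end

section
/- Let P be a symmetric positive definite n×n real matrix, R a symmetric positive definite m×m real matrix, H an m×n real matrix, m ∈ ℝⁿ and y ∈ ℝᵐ. Then the quadratic cost L(x) = (y − Hx)ᵀ R⁻¹ (y − Hx) + (x − m)ᵀ P⁻¹ (x − m) attains its unique global minimum at x* = m + K (y − H m), where K = P Hᵀ (H P Hᵀ + R)⁻¹. -/
open Matrix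

private lemma dot_symm {n : ℕ} {A : Matrix (Fin n) (Fin n) ℝ} (hA : Aᵀ = A)
    (u v : Fin n → ℝ) : u ⬝ᵥ (A *ᵥ v) = v ⬝ᵥ (A *ᵥ u) := by
  rw [dotProduct_mulVec, ← mulVec_transpose, hA, dotProduct_comm]

private lemma dot_shift {n m : ℕ} (H : Matrix (Fin m) (Fin n) ℝ) (d : Fin n → ℝ)
    (w : Fin m → ℝ) : (H *ᵥ d) ⬝ᵥ w = d ⬝ᵥ (Hᵀ *ᵥ w) := by
  rw [dotProduct_comm, dotProduct_mulVec, ← mulVec_transpose, dotProduct_comm]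

/-- The least-squares cost `L(x) = ‖y − Hx‖²_R + ‖x − m‖²_P` attains its unique
global minimum at `x* = m + K (y − H m)` with Kalman gain `K = P Hᵀ (H P Hᵀ + R)⁻¹`. -/
theorem stmt_12 {n m : ℕ}
    (P : Matrix (Fin n) (Fin n) ℝ) (R : Matrix (Fin m) (Fin m) ℝ)
    (H : Matrix (Fin m) (Fin n) ℝ)
    (hP : P.PosDef) (hR : R.PosDef)
    (mv : Fin n → ℝ) (y : Fin m → ℝ) :
    let L : (Fin n → ℝ) → ℝ := fun x =>
      (y - H *ᵥ x) ⬝ᵥ (R⁻¹ *ᵥ (y - H *ᵥ x)) + (x - mv) ⬝ᵥ (P⁻¹ *ᵥ (x - mv))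
    let K : Matrix (Fin n) (Fin m) ℝ := P * Hᵀ * (H * P * Hᵀ + R)⁻¹
    let xstar : Fin n → ℝ := mv + K *ᵥ (y - H *ᵥ mv)
    ∀ x : Fin n → ℝ, x ≠ xstar → L xstar < L x := by
  intro L K xstar x hx
  have hHT : Hᴴ = Hᵀ := conjTranspose_eq_transpose_of_trivial H
  -- S = H P Hᵀ + R is positive definite
  have hHPH : (H * P * Hᵀ).PosSemidef := by
    simpa [hHT] using hP.posSemidef.mul_mul_conjTranspose_same H
  have hS : (H * P * Hᵀ + R).PosDef := Matrix.PosDef.posSemidef_add hHPH hR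
  have hRinv : R⁻¹ * R = 1 := nonsing_inv_mul R hR.det_pos.ne'.isUnit
  have hPinv : P⁻¹ * P = 1 := nonsing_inv_mul P hP.det_pos.ne'.isUnit
  have hSinv : (H * P * Hᵀ + R) * (H * P * Hᵀ + R)⁻¹ = 1 :=
    mul_nonsing_inv _ hS.det_pos.ne'.isUnit
  -- Key matrix identity: (Hᵀ R⁻¹ H + P⁻¹) K = Hᵀ R⁻¹
  have hMK : (Hᵀ * R⁻¹ * H + P⁻¹) * K = Hᵀ * R⁻¹ := by
    have h1 : (Hᵀ * R⁻¹ * H + P⁻¹) * (P * Hᵀ) = Hᵀ * R⁻¹ * (H * P * Hᵀ + R) := by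
      rw [Matrix.add_mul, Matrix.mul_add]
      congr 1
      · rw [Matrix.mul_assoc, Matrix.mul_assoc, Matrix.mul_assoc, Matrix.mul_assoc]
      · rw [← Matrix.mul_assoc, hPinv, Matrix.one_mul, Matrix.mul_assoc, hRinv,
          Matrix.mul_one]
    calc (Hᵀ * R⁻¹ * H + P⁻¹) * K
        = ((Hᵀ * R⁻¹ * H + P⁻¹) * (P * Hᵀ)) * (H * P * Hᵀ + R)⁻¹ := by
          simp only [K, Matrix.mul_assoc]
      _ = Hᵀ * R⁻¹ := by
          rw [h1, Matrix.mul_assoc, hSinv, Matrix.mul_one]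
  have hPK : P⁻¹ * K = Hᵀ * R⁻¹ - Hᵀ * R⁻¹ * H * K := by
    rw [Matrix.add_mul] at hMK
    exact eq_sub_of_add_eq' hMK
  set a0 : Fin m → ℝ := y - H *ᵥ mv with ha0
  set b : Fin n → ℝ := xstar - mv with hb
  set a : Fin m → ℝ := y - H *ᵥ xstar with ha
  set d : Fin n → ℝ := x - xstar with hd
  have hxm : b = K *ᵥ a0 := by simp [hb, xstar, ha0]
  have hya : a = a0 - H *ᵥ (K *ᵥ a0) := by
    simp only [ha, xstar, mulVec_add, ha0]
    abel
  -- gradient vanishes at xstar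
  clear_value a0 b a d
  have hg : P⁻¹ *ᵥ b = Hᵀ *ᵥ (R⁻¹ *ᵥ a) := by
    rw [hxm, hya, mulVec_sub]
    simp only [mulVec_mulVec, mulVec_sub, sub_mulVec]
    rw [← sub_mulVec]
    rw [hPK]
    simp [Matrix.mul_assoc]
  -- quadratic part
  set Mq : Matrix (Fin n) (Fin n) ℝ := Hᵀ * R⁻¹ * H + P⁻¹ with hMq
  have hRt : Rᵀ = R := by
    rw [← conjTranspose_eq_transpose_of_trivial]; exact hR.isHermitian
  have hPt : Pᵀ = P := by
    rw [← conjTranspose_eq_transpose_of_trivial]; exact hP.isHermitian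
  have hRsym : (R⁻¹)ᵀ = R⁻¹ := by rw [transpose_nonsing_inv, hRt]
  have hPsym : (P⁻¹)ᵀ = P⁻¹ := by rw [transpose_nonsing_inv, hPt]
  -- Mq is positive definite
  have hMqPD : Mq.PosDef := by
    have h1 : (Hᵀ * R⁻¹ * H).PosSemidef := by
      simpa [hHT] using hR.inv.posSemidef.conjTranspose_mul_mul_same H
    exact Matrix.PosDef.posSemidef_add h1 hP.inv
  have hdne : d ≠ 0 := fun h => hx (by rw [hd] at h; exact sub_eq_zero.mp h)
  have hpos : 0 < d ⬝ᵥ (Mq *ᵥ d) := by simpa using hMqPD.dotProduct_mulVec_pos hdne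
  -- expansion of L
  have hxd : x = xstar + d := by rw [hd]; abel
  have e1 : y - H *ᵥ x = a - H *ᵥ d := by rw [ha, hxd, mulVec_add]; abel
  have e2 : x - mv = b + d := by rw [hb, hxd]; abel
  have h1 : a ⬝ᵥ (R⁻¹ *ᵥ (H *ᵥ d)) = d ⬝ᵥ (P⁻¹ *ᵥ b) := by
    rw [dot_symm hRsym, dot_shift, ← hg, dot_symm hPsym]
  have h2 : (H *ᵥ d) ⬝ᵥ (R⁻¹ *ᵥ a) = d ⬝ᵥ (P⁻¹ *ᵥ b) := by
    rw [dot_shift, ← hg, dot_symm hPsym]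
  have h3 : b ⬝ᵥ (P⁻¹ *ᵥ d) = d ⬝ᵥ (P⁻¹ *ᵥ b) := dot_symm hPsym b d
  have h4 : d ⬝ᵥ (Mq *ᵥ d) = (H *ᵥ d) ⬝ᵥ (R⁻¹ *ᵥ (H *ᵥ d)) + d ⬝ᵥ (P⁻¹ *ᵥ d) := by
    rw [hMq, add_mulVec, dotProduct_add]
    congr 1
    rw [dot_shift, mulVec_mulVec, mulVec_mulVec]
  have hL : L x = L xstar + d ⬝ᵥ (Mq *ᵥ d) := by
    show (y - H *ᵥ x) ⬝ᵥ (R⁻¹ *ᵥ (y - H *ᵥ x)) + (x - mv) ⬝ᵥ (P⁻¹ *ᵥ (x - mv))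
      = (y - H *ᵥ xstar) ⬝ᵥ (R⁻¹ *ᵥ (y - H *ᵥ xstar))
        + (xstar - mv) ⬝ᵥ (P⁻¹ *ᵥ (xstar - mv)) + d ⬝ᵥ (Mq *ᵥ d)
    rw [e1, e2, ← ha, ← hb]
    simp only [mulVec_sub, mulVec_add, dotProduct_sub, sub_dotProduct,
      dotProduct_add, add_dotProduct]
    rw [h4]
    linarith [h1, h2, h3]
  rw [hL]
  linarith
end
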